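/- For any integer k ≥ 2, the even cycle C_{2k} admits an interval t-coloring if and only if t ∈ [2, k+1]; in particular C_{2k} is interval colorable. -/

import Mathlib

open SimpleGraph

/-- `Q` is a `t`-cyclic interval. -/
def IsCyclicInterval (t : ℕ) (Q : Set ℕ) : Prop :=
  ∃ i₁ ∈ Set.Icc 1 t, ∃ i₂ ∈ Set.Icc 1 t,
    Q = Set.Icc (min i₁ i₂) (max i₁ i₂) ∨
    Q = Set.Icc 1 t \ (Set.Icc (min i₁ i₂) (max i₁ i₂) \ {i₁, i₂})

/-- A proper edge `t`-coloring: colors in `[1,t]`, adjacent edges differ, all colors used. -/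
def IsProperEdgeColoring {V : Type*} (G : SimpleGraph V) (t : ℕ) (φ : Sym2 V → ℕ) : Prop :=
  (∀ e ∈ G.edgeSet, φ e ∈ Set.Icc 1 t) ∧
  (∀ e₁ ∈ G.edgeSet, ∀ e₂ ∈ G.edgeSet, e₁ ≠ e₂ → (∃ x, x ∈ e₁ ∧ x ∈ e₂) → φ e₁ ≠ φ e₂) ∧
  (∀ c ∈ Set.Icc 1 t, ∃ e ∈ G.edgeSet, φ e = c)

/-- A cyclically-interval `t`-coloring. -/
def IsCyclicIntervalColoring {V : Type*} (G : SimpleGraph V) (t : ℕ) (φ : Sym2 V → ℕ) : Prop :=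
  IsProperEdgeColoring G t φ ∧
  ∀ x : V, (G.incidenceSet x).Nonempty → IsCyclicInterval t (φ '' G.incidenceSet x)

/-- An interval `t`-coloring. -/
def IsIntervalColoring {V : Type*} (G : SimpleGraph V) (t : ℕ) (φ : Sym2 V → ℕ) : Prop :=
  IsProperEdgeColoring G t φ ∧
  ∀ x : V, (G.incidenceSet x).Nonempty → ∃ a b, φ '' G.incidenceSet x = Set.Icc a b

/-- `TP(u,v)` along a path `p`. -/
def pathTP {V : Type*} (G : SimpleGraph V) {u v : V} (p : G.Walk u v) : Set (Sym2 V) :=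
  if p.length ≤ 1 then {e | e ∈ p.edges}
  else ⋃ x ∈ {w | w ∈ p.support ∧ w ≠ u ∧ w ≠ v}, G.incidenceSet x

/-- `M(H)`: maximum of `|TP(b_i,b_j)|` over pairs of vertices. -/
noncomputable def treeM {V : Type*} (G : SimpleGraph V) : ℕ :=
  sSup {n | ∃ (u v : V) (p : G.Walk u v), p.IsPath ∧ (pathTP G p).ncard = n}

noncomputable def Wcyc {V : Type*} (G : SimpleGraph V) : ℕ :=
  sSup {t | ∃ φ, IsCyclicIntervalColoring G t φ}

noncomputable def wcyc {V : Type*} (G : SimpleGraph V) : ℕ :=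
  sInf {t | ∃ φ, IsCyclicIntervalColoring G t φ}

noncomputable def Wint {V : Type*} (G : SimpleGraph V) : ℕ :=
  sSup {t | ∃ φ, IsIntervalColoring G t φ}

noncomputable def wint {V : Type*} (G : SimpleGraph V) : ℕ :=
  sInf {t | ∃ φ, IsIntervalColoring G t φ}

/-- Chromatic index: least `n` admitting a proper edge coloring with colors in `[1,n]`. -/
noncomputable def chromIndex {V : Type*} (G : SimpleGraph V) : ℕ :=
  sInf {n | ∃ φ : Sym2 V → ℕ, (∀ e ∈ G.edgeSet, φ e ∈ Set.Icc 1 n) ∧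
    (∀ e₁ ∈ G.edgeSet, ∀ e₂ ∈ G.edgeSet, e₁ ≠ e₂ → (∃ x, x ∈ e₁ ∧ x ∈ e₂) → φ e₁ ≠ φ e₂)}


section helpers

lemma fin_sub_val {n : ℕ} (a b : Fin n) :
    (a - b).val = if b.val ≤ a.val then a.val - b.val else a.val + n - b.val := by
  have h := Fin.coe_int_sub_eq_ite a b
  have := a.isLt; have := b.isLt
  split at h <;> rename_i hle
  · rw [Fin.le_def] at hle; rw [if_pos hle]; omega
  · rw [Fin.le_def, not_le] at hle; rw [if_neg (by omega)]; omega

lemma fin_add_val {n : ℕ} (a b : Fin n) :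
    (a + b).val = if a.val + b.val < n then a.val + b.val else a.val + b.val - n := by
  have h := Fin.coe_int_add_eq_ite a b
  have := a.isLt; have := b.isLt
  split at h <;> rename_i hlt
  · rw [if_pos hlt]; omega
  · rw [not_lt] at hlt; rw [if_neg (by omega)]; omega

lemma fin_val_one'' {n : ℕ} [NeZero n] (h : 2 ≤ n) : (1 : Fin n).val = 1 := by
  rw [Fin.val_one']; exact Nat.mod_eq_of_lt (by omega)

open Fin.CommRing in
lemma fin_sub_one {n : ℕ} [NeZero n] (h : 2 ≤ n) {a b : Fin n} (hab : (a - b).val = 1) :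
    a = b + 1 := by
  have h1 : a - b = 1 := by
    apply Fin.ext; rw [fin_val_one'' h]; omega
  have h2 := eq_add_of_sub_eq h1
  rw [h2]; ring

open Fin.CommRing in
lemma fin_add_sub_one {n : ℕ} [NeZero n] (h : 2 ≤ n) (a : Fin n) : (a + 1 - a).val = 1 := by
  have h1 : a + 1 - a = 1 := by ring
  rw [h1, fin_val_one'' h]

lemma fin_add_one_val {n : ℕ} [NeZero n] (h : 2 ≤ n) (i : Fin n) :
    (i + 1).val = if i.val + 1 < n then i.val + 1 else 0 := by
  rw [fin_add_val, fin_val_one'' h]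
  have := i.isLt
  split_ifs <;> omega

lemma cyc_edge_iff {n : ℕ} [NeZero n] (h : 2 ≤ n) {e : Sym2 (Fin n)} :
    e ∈ (cycleGraph n).edgeSet ↔ ∃ a : Fin n, e = s(a, a+1) := by
  induction e with
  | _ a b =>
    rw [mem_edgeSet, cycleGraph_adj']
    constructor
    · rintro (h1 | h1)
      · obtain rfl := fin_sub_one h h1
        exact ⟨b, Sym2.eq_swap⟩
      · obtain rfl := fin_sub_one h h1
        exact ⟨a, rfl⟩
    · rintro ⟨c, hc⟩
      rw [Sym2.eq_iff] at hc
      rcases hc with ⟨rfl, rfl⟩ | ⟨rfl, rfl⟩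
      · right; exact fin_add_sub_one h a
      · left; exact fin_add_sub_one h b

lemma cyc_inc_iff {n : ℕ} [NeZero n] (h : 2 ≤ n) (x : Fin n) (e : Sym2 (Fin n)) :
    e ∈ (cycleGraph n).incidenceSet x ↔ e = s(x-1, x) ∨ e = s(x, x+1) := by
  constructor
  · rintro ⟨he, hx⟩
    rw [cyc_edge_iff h] at he; obtain ⟨a, rfl⟩ := he
    rw [Sym2.mem_iff] at hx
    rcases hx with rfl | rfl
    · right; rfl
    · left; rw [add_sub_cancel_right]
  · rintro (rfl | rfl)
    · exact ⟨(cyc_edge_iff h).2 ⟨x-1, by rw [sub_add_cancel]⟩, by simp [sub_add_cancel]⟩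
    · exact ⟨(cyc_edge_iff h).2 ⟨x, rfl⟩, by simp⟩

open Fin.CommRing in
lemma walk_bound {n : ℕ} [NeZero n] (c : Fin n → ℕ)
    (hstep : ∀ i : Fin n, c (i+1) = c i + 1 ∨ c i = c (i+1) + 1) :
    ∀ (m : ℕ) (i : Fin n), c (i + (m : Fin n)) ≤ c i + m ∧ c i ≤ c (i + (m : Fin n)) + m := by
  intro m
  induction m with
  | zero => intro i; simp
  | succ m ih =>
    intro i
    have h1 : (((m+1 : ℕ)) : Fin n) = (m : Fin n) + 1 := by push_cast; ring
    rw [h1, ← add_assoc]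
    have h2 := hstep (i + (m : Fin n))
    have h3 := ih i
    omega

lemma pair_eq_Icc {x y a b : ℕ} (hxy : x ≠ y) (h : ({x, y} : Set ℕ) = Set.Icc a b) :
    y = x + 1 ∨ x = y + 1 := by
  rw [Set.ext_iff] at h
  simp only [Set.mem_insert_iff, Set.mem_singleton_iff, Set.mem_Icc] at h
  have h1 := h x; have h2 := h y; have h3 := h a; have h4 := h b; have h5 := h (a+1)
  omega

lemma pair_Icc (a : ℕ) : ({a, a+1} : Set ℕ) = Set.Icc a (a+1) := by
  ext z; simp only [Set.mem_insert_iff, Set.mem_singleton_iff, Set.mem_Icc]; omega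

def cfun (t i : ℕ) : ℕ :=
  if i < t then i + 1 else if i < 2*t - 2 then 2*t - 1 - i else if i % 2 = 0 then 1 else 2

lemma cfun_mem {t : ℕ} (i : ℕ) (ht : 2 ≤ t) : 1 ≤ cfun t i ∧ cfun t i ≤ t := by
  unfold cfun; split_ifs <;> omega

lemma cfun_step {t : ℕ} (ht : 2 ≤ t) (j : ℕ) :
    cfun t (j+1) = cfun t j + 1 ∨ cfun t j = cfun t (j+1) + 1 := by
  unfold cfun; split_ifs <;> omega

end helpers

open Fin.CommRing in
/-- For any `k ≥ 2`, the even cycle `C_{2k}` admits an interval `t`-coloring iff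
`t ∈ [2, k+1]`. -/
theorem stmt10 (k : ℕ) (hk : 2 ≤ k) (t : ℕ) :
    (∃ φ, IsIntervalColoring (SimpleGraph.cycleGraph (2 * k)) t φ) ↔ t ∈ Set.Icc 2 (k + 1) := by
  haveI : NeZero (2*k) := ⟨by omega⟩
  have hn2 : 2 ≤ 2*k := by omega
  rw [Set.mem_Icc]
  constructor
  · rintro ⟨φ, ⟨hbound, hproper, hsurj⟩, hint⟩
    set c : Fin (2*k) → ℕ := fun i => φ s(i, i+1) with hc
    have hedge : ∀ i : Fin (2*k), s(i, i+1) ∈ (cycleGraph (2*k)).edgeSet :=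
      fun i => (cyc_edge_iff hn2).2 ⟨i, rfl⟩
    have hnei : ∀ i : Fin (2*k), s(i, i+1) ≠ s(i+1, i+1+1) := by
      intro i heq
      rw [Sym2.eq_iff] at heq
      have hv1 := fin_add_one_val hn2 i
      have hv2 := fin_add_one_val hn2 (i+1)
      have hlt := i.isLt
      rcases heq with ⟨h1, _⟩ | ⟨h1, _⟩ <;>
        have hh := congrArg Fin.val h1 <;>
        split_ifs at hv1 hv2 <;> omega
    have hcne : ∀ i : Fin (2*k), c i ≠ c (i+1) := by
      intro i
      exact hproper _ (hedge i) _ (hedge (i+1)) (hnei i)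
        ⟨i+1, Sym2.mem_mk_right i (i+1), Sym2.mem_mk_left (i+1) (i+1+1)⟩
    have hincset : ∀ x : Fin (2*k),
        (cycleGraph (2*k)).incidenceSet x = {s(x-1, x), s(x, x+1)} := by
      intro x
      ext e
      rw [cyc_inc_iff hn2]
      simp [Set.mem_insert_iff]
    have hstep : ∀ i : Fin (2*k), c (i+1) = c i + 1 ∨ c i = c (i+1) + 1 := by
      intro i
      obtain ⟨a, b, hab⟩ := hint (i+1) ⟨s(i, i+1), (cyc_inc_iff hn2 _ _).2
        (Or.inl (by rw [add_sub_cancel_right]))⟩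
      rw [hincset (i+1), add_sub_cancel_right, Set.image_pair] at hab
      exact pair_eq_Icc (hcne i) hab
    -- t ≥ 2
    have hb0 := hbound _ (hedge 0)
    have hb1 := hbound _ (hedge 1)
    rw [Set.mem_Icc] at hb0 hb1
    have h01 : c 0 ≠ c 1 := by
      have := hcne 0
      rwa [zero_add] at this
    have ht2 : 2 ≤ t := by
      have : (c 0 : ℕ) = φ s(0, 0+1) := rfl
      have h1 : (c 1 : ℕ) = φ s(1, 1+1) := rfl
      omega
    -- colors 1 and t are used
    obtain ⟨e1, he1, hφ1⟩ := hsurj 1 (Set.mem_Icc.2 ⟨le_refl 1, by omega⟩)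
    obtain ⟨et, het, hφt⟩ := hsurj t (Set.mem_Icc.2 ⟨by omega, le_refl t⟩)
    obtain ⟨i0, rfl⟩ := (cyc_edge_iff hn2).1 he1
    obtain ⟨j0, rfl⟩ := (cyc_edge_iff hn2).1 het
    have hci0 : c i0 = 1 := hφ1
    have hcj0 : c j0 = t := hφt
    have hwb := walk_bound c hstep
    set d := (j0 - i0).val with hd
    have hjd : i0 + (d : Fin (2*k)) = j0 := by
      rw [hd, Fin.cast_val_eq_self]; ring
    have hdlt : d < 2*k := (j0 - i0).isLt
    have hid : j0 + ((2*k - d : ℕ) : Fin (2*k)) = i0 := by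
      have hz : ((2*k - d : ℕ) : Fin (2*k)) + (d : Fin (2*k)) = 0 := by
        rw [← Nat.cast_add]
        have : 2*k - d + d = 2*k := by omega
        rw [this]
        exact Fin.natCast_self (2*k)
      rw [← hjd]
      calc i0 + (d : Fin (2*k)) + ((2*k - d : ℕ) : Fin (2*k))
          = i0 + (((2*k - d : ℕ) : Fin (2*k)) + (d : Fin (2*k))) := by ring
        _ = i0 := by rw [hz, add_zero]
    have h1 := (hwb d i0).1
    have h2 := (hwb (2*k - d) j0).2
    rw [hjd] at h1
    rw [hid] at h2
    exact ⟨ht2, by omega⟩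
  · rintro ⟨ht2, htk⟩
    set cc : Fin (2*k) → ℕ := fun i => cfun t i.val with hcc
    have hstep : ∀ i : Fin (2*k), cc (i+1) = cc i + 1 ∨ cc i = cc (i+1) + 1 := by
      intro i
      have hv := fin_add_one_val hn2 i
      by_cases hlt : i.val + 1 < 2*k
      · rw [if_pos hlt] at hv
        show cfun t (i+1).val = cfun t i.val + 1 ∨ cfun t i.val = cfun t (i+1).val + 1
        rw [hv]
        exact cfun_step ht2 i.val
      · rw [if_neg hlt] at hv
        have hival : i.val = 2*k - 1 := by have := i.isLt; omega
        right
        show cfun t i.val = cfun t (i+1).val + 1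
        rw [hv, hival]
        unfold cfun
        split_ifs <;> omega
    have hsym : ∀ a b : Fin (2*k),
        (if (b - a).val = 1 then cc a else if (a - b).val = 1 then cc b else 0) =
        (if (a - b).val = 1 then cc b else if (b - a).val = 1 then cc a else 0) := by
      intro a b
      by_cases h1 : (b - a).val = 1 <;> by_cases h2 : (a - b).val = 1 <;>
        simp only [h1, h2, if_pos, if_neg, if_true, if_false]
      have e1 := fin_sub_val b a
      have e2 := fin_sub_val a b
      rw [h1] at e1; rw [h2] at e2
      have := a.isLt; have := b.isLt
      split_ifs at e1 e2 <;> omega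
    set φ : Sym2 (Fin (2*k)) → ℕ := Sym2.lift ⟨fun a b =>
      if (b - a).val = 1 then cc a else if (a - b).val = 1 then cc b else 0, hsym⟩ with hφ
    have hφedge : ∀ a : Fin (2*k), φ s(a, a+1) = cc a := by
      intro a
      rw [hφ, Sym2.lift_mk]
      simp only
      rw [if_pos (fin_add_sub_one hn2 a)]
    have hφedge' : ∀ a : Fin (2*k), φ s(a-1, a) = cc (a-1) := by
      intro a
      have : s(a-1, a) = s(a-1, (a-1)+1) := by rw [sub_add_cancel]
      rw [this, hφedge]
    have hstep' : ∀ x : Fin (2*k), cc x = cc (x-1) + 1 ∨ cc (x-1) = cc x + 1 := by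
      intro x
      have := hstep (x-1)
      rwa [sub_add_cancel] at this
    refine ⟨φ, ⟨?_, ?_, ?_⟩, ?_⟩
    · intro e he
      obtain ⟨a, rfl⟩ := (cyc_edge_iff hn2).1 he
      rw [hφedge]
      exact Set.mem_Icc.2 ⟨(cfun_mem a.val ht2).1, (cfun_mem a.val ht2).2⟩
    · rintro e1 he1 e2 he2 hne ⟨x, hx1, hx2⟩
      have m1 : e1 = s(x-1, x) ∨ e1 = s(x, x+1) := (cyc_inc_iff hn2 x e1).1 ⟨he1, hx1⟩
      have m2 : e2 = s(x-1, x) ∨ e2 = s(x, x+1) := (cyc_inc_iff hn2 x e2).1 ⟨he2, hx2⟩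
      rcases m1 with rfl | rfl <;> rcases m2 with rfl | rfl
      · exact absurd rfl hne
      · rw [hφedge', hφedge]
        rcases hstep' x with h | h <;> omega
      · rw [hφedge', hφedge]
        rcases hstep' x with h | h <;> omega
      · exact absurd rfl hne
    · intro m hm
      rw [Set.mem_Icc] at hm
      have hmlt : m - 1 < 2*k := by omega
      refine ⟨s((⟨m-1, hmlt⟩ : Fin (2*k)), (⟨m-1, hmlt⟩ : Fin (2*k)) + 1),
        (cyc_edge_iff hn2).2 ⟨_, rfl⟩, ?_⟩
      rw [hφedge]
      show cfun t (m-1) = m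
      unfold cfun
      rw [if_pos (by omega)]
      omega
    · intro x _
      have hincset : (cycleGraph (2*k)).incidenceSet x = {s(x-1, x), s(x, x+1)} := by
        ext e
        rw [cyc_inc_iff hn2]
        simp [Set.mem_insert_iff]
      rw [hincset, Set.image_pair, hφedge', hφedge]
      rcases hstep' x with h | h
      · exact ⟨cc (x-1), cc x, by rw [h, pair_Icc]⟩
      · exact ⟨cc x, cc (x-1), by rw [h, Set.pair_comm, pair_Icc]⟩
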